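/- For each positive integer n, the lattice Conv(ℝⁿ) satisfies the identity ((D_n) ∨ z) ∧ y_1 ∧ y_2: for all convex subsets x, y_1, …, y_{n+1}, z of ℝⁿ, convexHull((x ∩ convexHull(⋃_{i=1}^{n+1} y_i)) ∪ z) ∩ y_1 ∩ y_2 = convexHull((⋃_{i=1}^{n+1} (x ∩ convexHull(⋃_{j≠i} y_j))) ∪ z) ∩ y_1 ∩ y_2. -/

import Mathlib

open Set Finset

/-- Key geometric lemma: if `p ∈ y 0 ∩ y 1` and `a` lies in the convex hull of the union of the
`n+1` sets `y i` in `ℝⁿ`, then `a` lies in the convex hull of the union of all but one of them. -/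
lemma mem_hull_erase {n : ℕ} (hn : 0 < n) (y : Fin (n + 1) → Set (Fin n → ℝ))
    {p a : Fin n → ℝ} (hp0 : p ∈ y 0) (hp1 : p ∈ y 1)
    (ha : a ∈ convexHull ℝ (⋃ i, y i)) :
    ∃ k, a ∈ convexHull ℝ (⋃ j, ⋃ (_ : j ≠ k), y j) := by
  classical
  obtain ⟨ι, hfin, z, w, hzr, hindep, hwpos, hwsum, hws⟩ :=
    eq_pos_convex_span_of_mem_convexHull ha
  have hz' : ∀ i, ∃ j, z i ∈ y j := fun i => Set.mem_iUnion.mp (hzr ⟨i, rfl⟩)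
  choose g hg using hz'
  by_cases hsurj : Function.Surjective g
  · -- the hard case: every `y j` is used; then `z` is a simplex spanning `ℝⁿ`.
    have hcard_le : Fintype.card ι ≤ n + 1 := by
      refine hindep.card_le_finrank_succ.trans ?_
      have := Submodule.finrank_le (vectorSpan ℝ (Set.range z))
      rw [Module.finrank_fin_fun] at this
      omega
    have hcard_ge : n + 1 ≤ Fintype.card ι := by
      simpa using Fintype.card_le_of_surjective g hsurj
    have hcard : Fintype.card ι = n + 1 := le_antisymm hcard_le hcard_ge
    have hbij : Function.Bijective g :=
      (Fintype.bijective_iff_surjective_and_card g).mpr ⟨hsurj, by simp [hcard]⟩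
    have htot : affineSpan ℝ (Set.range z) = ⊤ :=
      hindep.affineSpan_eq_top_iff_card_eq_finrank_add_one.mpr
        (by rw [hcard, Module.finrank_fin_fun])
    let b : AffineBasis ι ℝ (Fin n → ℝ) := ⟨z, hindep, htot⟩
    set s : ι → ℝ := fun i => b.coord i p with hs_def
    have hssum : ∑ i, s i = 1 := b.sum_coord_apply_eq_one p
    have hprep : ∑ i, s i • z i = p := b.linear_combination_coord_eq_self p
    set I : Finset ι := Finset.univ.filter (fun i => 0 < s i) with hI_def
    have hInon : I.Nonempty := by
      by_contra h
      have h' : ∀ i, s i ≤ 0 := by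
        intro i
        by_contra hi
        exact h ⟨i, Finset.mem_filter.mpr ⟨Finset.mem_univ i, lt_of_not_ge hi⟩⟩
      have : (1 : ℝ) ≤ 0 := hssum ▸ Finset.sum_nonpos (fun i _ => h' i)
      linarith
    set lam : ℝ := I.inf' hInon (fun i => w i / s i) with hlam_def
    obtain ⟨i₀, hi₀I, hi₀⟩ := I.exists_mem_eq_inf' hInon (fun i => w i / s i)
    have hsi₀ : 0 < s i₀ := (Finset.mem_filter.mp hi₀I).2
    have hlam_eq : lam = w i₀ / s i₀ := hi₀
    have hlam_nonneg : 0 ≤ lam := by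
      rw [hlam_eq]
      exact div_nonneg (hwpos i₀).le hsi₀.le
    have key_i₀ : w i₀ - lam * s i₀ = 0 := by
      rw [hlam_eq]
      field_simp
      ring
    have hnonneg : ∀ i, 0 ≤ w i - lam * s i := by
      intro i
      by_cases h : 0 < s i
      · have hiI : i ∈ I := Finset.mem_filter.mpr ⟨Finset.mem_univ i, h⟩
        have := Finset.inf'_le (fun i => w i / s i) hiI
        rw [← hlam_def] at this
        have := (le_div_iff₀ h).mp this
        linarith
      · push_neg at h
        have : lam * s i ≤ 0 := mul_nonpos_of_nonneg_of_nonpos hlam_nonneg h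
        linarith [(hwpos i).le]
    -- now build the convex combination witnessing the claim
    refine ⟨g i₀, ?_⟩
    set S : Set (Fin n → ℝ) := ⋃ j, ⋃ (_ : j ≠ g i₀), y j with hS_def
    have hpS : p ∈ S := by
      by_cases hk0 : g i₀ = 0
      · have hval : ((1 : Fin (n + 1)) : ℕ) = 1 := by
          simp [Fin.val_one', Nat.mod_eq_of_lt (by omega : 1 < n + 1)]
        have h10 : (1 : Fin (n + 1)) ≠ g i₀ := by
          rw [hk0]
          intro h
          rw [h] at hval
          simp at hval
        exact Set.mem_iUnion.mpr ⟨1, Set.mem_iUnion.mpr ⟨h10, hp1⟩⟩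
      · exact Set.mem_iUnion.mpr ⟨0, Set.mem_iUnion.mpr ⟨Ne.symm hk0, hp0⟩⟩
    have hzS : ∀ i, i ≠ i₀ → z i ∈ S := by
      intro i hi
      have : g i ≠ g i₀ := fun h => hi (hbij.1 h)
      exact Set.mem_iUnion.mpr ⟨g i, Set.mem_iUnion.mpr ⟨this, hg i⟩⟩
    set u : ι → ℝ := fun i => if i = i₀ then lam else w i - lam * s i with hu_def
    set v : ι → Fin n → ℝ := fun i => if i = i₀ then p else z i with hv_def
    have husum : ∑ i, u i = 1 := by
      rw [← Finset.add_sum_erase _ u (Finset.mem_univ i₀)]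
      have h1 : ∑ i ∈ Finset.univ.erase i₀, u i
          = ∑ i ∈ Finset.univ.erase i₀, (w i - lam * s i) := by
        apply Finset.sum_congr rfl
        intro i hi
        simp [hu_def, (Finset.mem_erase.mp hi).1]
      rw [h1, Finset.sum_erase_eq_sub (Finset.mem_univ i₀), Finset.sum_sub_distrib,
        ← Finset.mul_sum, hwsum, hssum, key_i₀]
      simp [hu_def]
    have hunonneg : ∀ i ∈ Finset.univ, 0 ≤ u i := by
      intro i _
      by_cases h : i = i₀ <;> simp [hu_def, h, hlam_nonneg, hnonneg i]
    have hvS : ∀ i ∈ Finset.univ, v i ∈ S := by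
      intro i _
      by_cases h : i = i₀
      · simp [hv_def, h, hpS]
      · simpa [hv_def, h] using hzS i h
    have hcomb : ∑ i, u i • v i = a := by
      rw [← Finset.add_sum_erase _ (fun i => u i • v i) (Finset.mem_univ i₀)]
      have h1 : ∑ i ∈ Finset.univ.erase i₀, u i • v i
          = ∑ i ∈ Finset.univ.erase i₀, (w i - lam * s i) • z i := by
        apply Finset.sum_congr rfl
        intro i hi
        simp [hu_def, hv_def, (Finset.mem_erase.mp hi).1]
      have h2 : ∑ i, (w i - lam * s i) • z i = a - lam • p := by
        have : ∀ i, (w i - lam * s i) • z i = w i • z i - lam • (s i • z i) := by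
          intro i
          rw [sub_smul, smul_smul]
        simp_rw [this]
        rw [Finset.sum_sub_distrib, ← Finset.smul_sum, hws, hprep]
      rw [h1, Finset.sum_erase_eq_sub (Finset.mem_univ i₀), h2, key_i₀]
      simp [hu_def, hv_def]
    rw [← hcomb]
    exact (convex_convexHull ℝ S).sum_mem hunonneg husum
      (fun i hi => subset_convexHull ℝ S (hvS i hi))
  · -- easy case: some `y k` is unused
    simp only [Function.Surjective, not_forall, not_exists] at hsurj
    obtain ⟨k, hk⟩ := hsurj
    refine ⟨k, ?_⟩
    rw [← hws]
    refine (convex_convexHull ℝ _).sum_mem (fun i _ => (hwpos i).le) hwsum (fun i _ => ?_)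
    refine subset_convexHull ℝ _ ?_
    have : g i ≠ k := hk i
    exact Set.mem_iUnion.mpr ⟨g i, Set.mem_iUnion.mpr ⟨this, hg i⟩⟩

/-- For each positive integer `n`, the lattice `Conv(ℝⁿ)` satisfies the identity
`((D_n) ∨ z) ∧ y₁ ∧ y₂`. -/
theorem conv_Dn_join_meet (n : ℕ) (hn : 0 < n) (x : Set (Fin n → ℝ))
    (y : Fin (n + 1) → Set (Fin n → ℝ)) (z : Set (Fin n → ℝ))
    (hx : Convex ℝ x) (hy : ∀ i, Convex ℝ (y i)) (hz : Convex ℝ z) :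
    convexHull ℝ ((x ∩ convexHull ℝ (⋃ i, y i)) ∪ z) ∩ y 0 ∩ y 1 =
      convexHull ℝ ((⋃ i, x ∩ convexHull ℝ (⋃ j, ⋃ (_ : j ≠ i), y j)) ∪ z) ∩ y 0 ∩ y 1 := by
  set A : Set (Fin n → ℝ) := x ∩ convexHull ℝ (⋃ i, y i) with hA_def
  set B : Set (Fin n → ℝ) := ⋃ i, x ∩ convexHull ℝ (⋃ j, ⋃ (_ : j ≠ i), y j) with hB_def
  have hBA : B ⊆ A := by
    refine Set.iUnion_subset fun i => Set.inter_subset_inter_right x ?_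
    refine convexHull_mono ?_
    exact Set.iUnion_subset fun j => Set.iUnion_subset fun _ => Set.subset_iUnion y j
  apply Set.Subset.antisymm
  · -- hard inclusion
    rintro p ⟨⟨hpA, hp0⟩, hp1⟩
    refine ⟨⟨?_, hp0⟩, hp1⟩
    -- key: any point of `A` is in fact in `B`, given `p ∈ y 0 ∩ y 1`
    have hkey : ∀ a ∈ A, a ∈ B := by
      rintro a ⟨hax, hahull⟩
      obtain ⟨k, hk⟩ := mem_hull_erase hn y hp0 hp1 hahull
      exact Set.mem_iUnion.mpr ⟨k, hax, hk⟩
    rcases Set.eq_empty_or_nonempty A with hA | hA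
    · refine convexHull_mono ?_ hpA
      rw [hA]
      simp
    rcases Set.eq_empty_or_nonempty z with hzE | hzE
    · rw [hzE, Set.union_empty] at hpA
      have hAconv : Convex ℝ A := hx.inter (convex_convexHull ℝ _)
      rw [hAconv.convexHull_eq] at hpA
      exact subset_convexHull ℝ _ (Set.mem_union_left z (hkey p hpA))
    · have hAconv : Convex ℝ A := hx.inter (convex_convexHull ℝ _)
      rw [hAconv.convexHull_union hz hA hzE] at hpA
      rw [mem_convexJoin] at hpA
      obtain ⟨a, haA, c, hcz, hpseg⟩ := hpA
      refine segment_subset_convexHull ?_ ?_ hpseg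
      · exact Set.mem_union_left z (hkey a haA)
      · exact Set.mem_union_right B hcz
  · -- easy inclusion
    refine Set.inter_subset_inter ?_ le_rfl
    refine Set.inter_subset_inter ?_ le_rfl
    exact convexHull_mono (Set.union_subset_union_left z hBA)
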